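/- If (f_n) and (g_n) are sequences in H satisfying ⟨f,g⟩ = ∑_n ⟨f,f_n⟩⟨g_n,g⟩ for all f,g ∈ H (a weakly dual pair), and (λ_n g_n) is a Bessel sequence with bound A⁻¹ for positive weights λ_n, then (λ_n⁻¹ f_n) satisfies the lower frame inequality A‖f‖² ≤ ∑_n |⟨f, λ_n⁻¹ f_n⟩|² for all f ∈ H. -/

import Mathlib

open scoped ENNReal NNReal

/-- The Bessel-type sum `∑ₙ |⟨f, gₙ⟩|²` valued in `ℝ≥0∞`. -/
noncomputable def bSum {H : Type*} [NormedAddCommGroup H] [InnerProductSpace ℂ H]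
    (g : ℕ → H) (f : H) : ℝ≥0∞ :=
  ∑' n, ((‖(inner ℂ f (g n) : ℂ)‖₊ : ℝ≥0∞)) ^ 2

lemma bSum_eq {H : Type*} [NormedAddCommGroup H] [InnerProductSpace ℂ H]
    (g : ℕ → H) (f : H) :
    bSum g f = ∑' n, ((‖(inner ℂ f (g n) : ℂ)‖₊ ^ 2 : ℝ≥0) : ℝ≥0∞) := by
  simp [bSum, ENNReal.coe_pow]

theorem stmt1 {H : Type*} [NormedAddCommGroup H] [InnerProductSpace ℂ H] [CompleteSpace H]
    [TopologicalSpace.SeparableSpace H]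
    (F G : ℕ → H)
    (hdual : ∀ f g : H,
      HasSum (fun n => (inner ℂ f (F n) : ℂ) * (inner ℂ (G n) g : ℂ)) (inner ℂ f g : ℂ))
    (lam : ℕ → ℝ) (hlam : ∀ n, 0 < lam n) (A : ℝ) (hA : 0 < A)
    (hBessel : ∀ f : H, bSum (fun n => (lam n : ℂ) • G n) f
      ≤ ENNReal.ofReal A⁻¹ * (‖f‖₊ : ℝ≥0∞) ^ 2) :
    ∀ f : H, ENNReal.ofReal A * (‖f‖₊ : ℝ≥0∞) ^ 2
      ≤ bSum (fun n => (((lam n)⁻¹ : ℝ) : ℂ) • F n) f := by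
  intro f
  by_cases hS : bSum (fun n => (((lam n)⁻¹ : ℝ) : ℂ) • F n) f = ⊤
  · rw [hS]; exact le_top
  set a : ℕ → ℝ≥0 := fun n => ‖(inner ℂ f ((((lam n)⁻¹ : ℝ) : ℂ) • F n) : ℂ)‖₊ with ha
  set b : ℕ → ℝ≥0 := fun n => ‖(inner ℂ f (((lam n : ℝ) : ℂ) • G n) : ℂ)‖₊ with hb
  -- summability of squares
  have ha2 : Summable fun n => a n ^ 2 := by
    rw [bSum_eq] at hS
    exact ENNReal.tsum_coe_ne_top_iff_summable.1 hS
  have hBf := hBessel f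
  have hT : bSum (fun n => (lam n : ℂ) • G n) f ≠ ⊤ :=
    ne_top_of_le_ne_top
      (ENNReal.mul_ne_top ENNReal.ofReal_ne_top (ENNReal.pow_ne_top ENNReal.coe_ne_top)) hBf
  have hb2 : Summable fun n => b n ^ 2 := by
    rw [bSum_eq] at hT
    exact ENNReal.tsum_coe_ne_top_iff_summable.1 hT
  -- Cauchy–Schwarz (Hölder with p = q = 2)
  have hpq : Real.HolderConjugate 2 2 := Real.HolderConjugate.two_two
  have hr : ∀ x : ℝ≥0, x ^ (2 : ℝ) = x ^ 2 := fun x => by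
    rw [← NNReal.rpow_natCast]; norm_num
  have ha2' : Summable fun n => a n ^ (2 : ℝ) := by simpa [hr] using ha2
  have hb2' : Summable fun n => b n ^ (2 : ℝ) := by simpa [hr] using hb2
  obtain ⟨hsum_ab, hCS⟩ := NNReal.summable_and_inner_le_Lp_mul_Lq_tsum hpq ha2' hb2'
  -- rewrite a n * b n
  have hab : ∀ n, a n * b n
      = ‖((inner ℂ f (F n) : ℂ) * (inner ℂ (G n) f : ℂ))‖₊ := by
    intro n
    have h1 : ‖(inner ℂ (G n) f : ℂ)‖₊ = ‖(inner ℂ f (G n) : ℂ)‖₊ := by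
      rw [← inner_conj_symm (G n) f]
      exact RCLike.nnnorm_conj (K := ℂ) _
    simp only [ha, hb, inner_smul_right, nnnorm_mul, h1]
    have h2 : ‖((((lam n)⁻¹ : ℝ) : ℂ))‖₊ * ‖(((lam n : ℝ) : ℂ))‖₊ = 1 := by
      rw [← nnnorm_mul, ← Complex.ofReal_mul, inv_mul_cancel₀ (hlam n).ne']
      simp
    calc ‖((((lam n)⁻¹ : ℝ) : ℂ))‖₊ * ‖(inner ℂ f (F n) : ℂ)‖₊ *
          (‖(((lam n : ℝ) : ℂ))‖₊ * ‖(inner ℂ f (G n) : ℂ)‖₊)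
        = (‖((((lam n)⁻¹ : ℝ) : ℂ))‖₊ * ‖(((lam n : ℝ) : ℂ))‖₊) *
          (‖(inner ℂ f (F n) : ℂ)‖₊ * ‖(inner ℂ f (G n) : ℂ)‖₊) := by ring
      _ = ‖(inner ℂ f (F n) : ℂ)‖₊ * ‖(inner ℂ f (G n) : ℂ)‖₊ := by rw [h2, one_mul]
  -- ‖f‖₊ ^ 2 ≤ ∑' a n * b n
  have hsum_norm : Summable fun n => ‖((inner ℂ f (F n) : ℂ) * (inner ℂ (G n) f : ℂ))‖₊ := by
    simpa [hab] using hsum_ab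
  have hff : ‖f‖₊ ^ 2 ≤ ∑' n, a n * b n := by
    have h1 : (inner ℂ f f : ℂ) = ∑' n, (inner ℂ f (F n) : ℂ) * (inner ℂ (G n) f : ℂ) :=
      (hdual f f).tsum_eq.symm
    have h2 : ‖(inner ℂ f f : ℂ)‖₊ = ‖f‖₊ ^ 2 := by
      rw [inner_self_eq_norm_sq_to_K, nnnorm_pow]
      simp
    calc ‖f‖₊ ^ 2 = ‖(inner ℂ f f : ℂ)‖₊ := h2.symm
      _ ≤ ∑' n, ‖((inner ℂ f (F n) : ℂ) * (inner ℂ (G n) f : ℂ))‖₊ := by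
          rw [h1]; exact nnnorm_tsum_le hsum_norm
      _ = ∑' n, a n * b n := by simp_rw [hab]
  set Sa : ℝ≥0 := ∑' n, a n ^ 2 with hSa
  set Tb : ℝ≥0 := ∑' n, b n ^ 2 with hTb
  have hCS' : ‖f‖₊ ^ 2 ≤ Sa ^ (1/2 : ℝ) * Tb ^ (1/2 : ℝ) := by
    refine hff.trans (hCS.trans_eq ?_)
    simp_rw [hr]
    rfl
  have hsq : (‖f‖₊ ^ 2) ^ 2 ≤ Sa * Tb := by
    calc (‖f‖₊ ^ 2) ^ 2 ≤ (Sa ^ (1/2 : ℝ) * Tb ^ (1/2 : ℝ)) ^ 2 :=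
          pow_le_pow_left₀ zero_le hCS' 2
      _ = Sa * Tb := by
          rw [mul_pow, ← hr (Sa ^ (1/2:ℝ)), ← hr (Tb ^ (1/2:ℝ)),
            ← NNReal.rpow_mul, ← NNReal.rpow_mul]
          norm_num
  -- Bessel bound in ℝ≥0
  have hTb_le : Tb ≤ (A.toNNReal)⁻¹ * ‖f‖₊ ^ 2 := by
    have e1 : (Tb : ℝ≥0∞) = bSum (fun n => (lam n : ℂ) • G n) f := by
      rw [bSum_eq, hTb, ENNReal.coe_tsum hb2]
    have : (Tb : ℝ≥0∞) ≤ (((A.toNNReal)⁻¹ * ‖f‖₊ ^ 2 : ℝ≥0) : ℝ≥0∞) := by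
      calc (Tb : ℝ≥0∞) = bSum (fun n => (lam n : ℂ) • G n) f := e1
        _ ≤ ENNReal.ofReal A⁻¹ * (‖f‖₊ : ℝ≥0∞) ^ 2 := hBf
        _ = (((A.toNNReal)⁻¹ * ‖f‖₊ ^ 2 : ℝ≥0) : ℝ≥0∞) := by
            rw [ENNReal.ofReal, Real.toNNReal_inv]
            push_cast
            ring
    exact_mod_cast this
  -- conclude
  have hgoal : A.toNNReal * ‖f‖₊ ^ 2 ≤ Sa := by
    rcases eq_or_ne (‖f‖₊) 0 with hf0 | hf0
    · simp [hf0]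
    have hx : (0 : ℝ≥0) < ‖f‖₊ ^ 2 := by positivity
    have hA0 : (0 : ℝ≥0) < A.toNNReal := Real.toNNReal_pos.2 hA
    have h4 : (‖f‖₊ ^ 2) ^ 2 ≤ Sa * ((A.toNNReal)⁻¹ * ‖f‖₊ ^ 2) :=
      hsq.trans (mul_le_mul_right hTb_le Sa)
    have h6 : ‖f‖₊ ^ 2 ≤ Sa * (A.toNNReal)⁻¹ := by
      refine le_of_mul_le_mul_right ?_ hx
      calc ‖f‖₊ ^ 2 * ‖f‖₊ ^ 2 = (‖f‖₊ ^ 2) ^ 2 := (sq _).symm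
        _ ≤ Sa * ((A.toNNReal)⁻¹ * ‖f‖₊ ^ 2) := h4
        _ = Sa * (A.toNNReal)⁻¹ * ‖f‖₊ ^ 2 := (mul_assoc _ _ _).symm
    calc A.toNNReal * ‖f‖₊ ^ 2 ≤ A.toNNReal * (Sa * (A.toNNReal)⁻¹) :=
          mul_le_mul_right h6 _
      _ = Sa := by
          rw [mul_comm Sa, ← mul_assoc, mul_inv_cancel₀ hA0.ne', one_mul]
  calc ENNReal.ofReal A * (‖f‖₊ : ℝ≥0∞) ^ 2
      = ((A.toNNReal * ‖f‖₊ ^ 2 : ℝ≥0) : ℝ≥0∞) := by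
        rw [ENNReal.ofReal]; push_cast; ring
    _ ≤ ((Sa : ℝ≥0) : ℝ≥0∞) := ENNReal.coe_le_coe.2 hgoal
    _ = bSum (fun n => (((lam n)⁻¹ : ℝ) : ℂ) • F n) f := by
        rw [bSum_eq, hSa, ENNReal.coe_tsum ha2]
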